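/- Let q₀ = 2^h with h ≥ 1, q = 2q₀², and S = ⟨q, q+q₀, q+2q₀, q+2q₀+1⟩ the Suzuki semigroup (with genus g = q₀(q-1)). Then σ attains its maximum over S ∩ [0, c(S)] at s := (q₀-1)(q+q₀) = g - q/2, and σ(s) = (q₀/12)(4q - 3q₀ - 8). -/

import Mathlib

/-- σ(x) = x/2 - |S ∩ [0,x]| + 1 -/
noncomputable def sig (S : Set ℕ) (x : ℕ) : ℚ :=
  (x : ℚ) / 2 - ((S ∩ Set.Icc 0 x).ncard : ℚ) + 1

/-- ngCond: least c with [c,∞) ⊆ S -/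
noncomputable def ngCond (S : Set ℕ) : ℕ := sInf {k : ℕ | ∀ n, k ≤ n → n ∈ S}

namespace Suz

/-- canonical membership predicate for the Suzuki semigroup with parameter r = q₀ -/
def Pd (r n : ℕ) : Prop :=
  n % (2*r^2) / r ≤ 2 * (n / (2*r^2)) ∧
  (2 * (n % r) ≤ n % (2*r^2) / r ∨ n % (2*r^2) / r + 2*r + 2 ≤ 2 * (n / (2*r^2)))

instance (r : ℕ) : DecidablePred (Pd r) := fun n => by unfold Pd; infer_instance

/-- number of elements of S below x -/
def cnt (r x : ℕ) : ℕ := ((Finset.range x).filter (Pd r)).card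

lemma digits (r A B e : ℕ) (hr : 0 < r) (hB : B < 2*r) (he : e < r) :
    (A*(2*r^2) + B*r + e) / (2*r^2) = A ∧
    (A*(2*r^2) + B*r + e) % (2*r^2) / r = B ∧
    (A*(2*r^2) + B*r + e) % r = e := by
  have hq : 0 < 2*r^2 := by positivity
  have hlt : B*r + e < 2*r^2 := by nlinarith
  have h1 : A*(2*r^2) + B*r + e = (B*r + e) + A*(2*r^2) := by ring
  rw [h1]
  constructor
  · rw [Nat.add_mul_div_right _ _ hq, Nat.div_eq_of_lt hlt]; omega
  constructor
  · rw [Nat.add_mul_mod_self_right, Nat.mod_eq_of_lt hlt]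
    have h2 : B*r + e = e + B*r := by ring
    rw [h2, Nat.add_mul_div_right _ _ hr, Nat.div_eq_of_lt he]; omega
  · have h3 : (B*r + e) + A*(2*r^2) = e + (B + A*(2*r))*r := by ring
    rw [h3, Nat.add_mul_mod_self_right, Nat.mod_eq_of_lt he]

lemma Pd_iff (r A B e : ℕ) (hr : 0 < r) (hB : B < 2*r) (he : e < r) :
    Pd r (A*(2*r^2) + B*r + e) ↔ (B ≤ 2*A ∧ (2*e ≤ B ∨ B + 2*r + 2 ≤ 2*A)) := by
  obtain ⟨h1, h2, h3⟩ := digits r A B e hr hB he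
  unfold Pd
  rw [h1, h2, h3]

lemma cnt_succ (r n : ℕ) : cnt r (n+1) = cnt r n + (if Pd r n then 1 else 0) := by
  unfold cnt
  rw [Finset.range_add_one, Finset.filter_insert]
  split
  · rw [Finset.card_insert_of_notMem (by simp)]
  · simp

lemma cnt_add (r x m : ℕ) :
    cnt r (x + m) = cnt r x + ((Finset.range m).filter (fun e => Pd r (x + e))).card := by
  induction m with
  | zero => simp
  | succ m ih =>
      rw [← Nat.add_assoc, cnt_succ, ih, Finset.range_add_one, Finset.filter_insert]
      split
      · rw [Finset.card_insert_of_notMem (by simp)]; omega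
      · simp


def Snat (B : ℕ) : ℕ := B*B/4 + (B+1)/2

lemma Snat_even (u : ℕ) : Snat (2*u) = u*u + u := by
  unfold Snat
  have h : (2*u)*(2*u) = 4*(u*u) := by ring
  rw [h]; omega

lemma Snat_odd (u : ℕ) : Snat (2*u+1) = (u+1)*(u+1) := by
  unfold Snat
  have h : (2*u+1)*(2*u+1) = 4*(u*u+u)+1 := by ring
  rw [h]
  have h2 : (u+1)*(u+1) = u*u + 2*u + 1 := by ring
  omega

lemma Snat_succ (B : ℕ) : Snat (B+1) = Snat B + (B/2 + 1) := by
  rcases Nat.even_or_odd B with ⟨u, hu⟩ | ⟨u, hu⟩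
  · have hB : B = 2*u := by omega
    subst hB
    rw [Snat_odd, Snat_even]
    have h2 : (u+1)*(u+1) = u*u + 2*u + 1 := by ring
    omega
  · subst hu
    have h1 : 2*u+1+1 = 2*(u+1) := by ring
    rw [h1, Snat_even, Snat_odd]
    have h2 : (u+1)*(u+1) = u*u + 2*u + 1 := by ring
    omega

lemma Snat_le (r K : ℕ) (hK : K ≤ 2*r) : Snat K ≤ K*r + r := by
  unfold Snat
  have h : K*K ≤ 2*(K*r) := by nlinarith
  generalize hv : K*K = v at h
  generalize hw : K*r = w at h ⊢
  omega

section Blocks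

variable (r : ℕ)

lemma block_step (A B : ℕ) (hr : 0 < r) (hB : B < 2*r) :
    cnt r (A*(2*r^2) + (B+1)*r) = cnt r (A*(2*r^2) + B*r) +
      (if B ≤ 2*A then (if B + 2*r + 2 ≤ 2*A then r else B/2 + 1) else 0) := by
  have h1 : A*(2*r^2) + (B+1)*r = (A*(2*r^2) + B*r) + r := by ring
  rw [h1, cnt_add]
  congr 1
  have hmem : ∀ e ∈ Finset.range r, (Pd r (A*(2*r^2) + B*r + e) ↔
      (B ≤ 2*A ∧ (2*e ≤ B ∨ B + 2*r + 2 ≤ 2*A))) := by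
    intro e he
    exact Pd_iff r A B e hr hB (Finset.mem_range.mp he)
  rw [Finset.filter_congr (fun e he => by rw [hmem e he])]
  by_cases hBA : B ≤ 2*A
  · by_cases hfull : B + 2*r + 2 ≤ 2*A
    · rw [if_pos hBA, if_pos hfull]
      rw [Finset.filter_true_of_mem (fun e _ => ⟨hBA, Or.inr hfull⟩)]
      exact Finset.card_range r
    · rw [if_pos hBA, if_neg hfull]
      have : (Finset.range r).filter (fun e => B ≤ 2*A ∧ (2*e ≤ B ∨ B + 2*r + 2 ≤ 2*A))
          = Finset.range (B/2 + 1) := by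
        ext a
        simp only [Finset.mem_filter, Finset.mem_range]
        omega
      rw [this, Finset.card_range]
  · rw [if_neg hBA]
    rw [Finset.filter_false_of_mem (fun e _ h => hBA h.1)]
    simp

lemma reg1 (A : ℕ) (hr : 0 < r) (hA : A < r) :
    ∀ B, B ≤ 2*A + 1 → cnt r (A*(2*r^2) + B*r) = cnt r (A*(2*r^2)) + Snat B := by
  intro B
  induction B with
  | zero => intro _; simp [Snat]
  | succ B ih =>
      intro hB
      have hB' : B ≤ 2*A := by omega
      have hBlt : B < 2*r := by omega
      rw [block_step r A B hr hBlt, ih (by omega), if_pos hB',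
        if_neg (by omega), Snat_succ]
      omega

lemma reg1b (A : ℕ) (hr : 0 < r) (hA : A < r) :
    ∀ B, 2*A+1 ≤ B → B ≤ 2*r → cnt r (A*(2*r^2) + B*r) = cnt r (A*(2*r^2)) + Snat (2*A+1) := by
  intro B hB
  induction B, hB using Nat.le_induction with
  | base => intro _; exact reg1 r A hr hA (2*A+1) le_rfl
  | succ B hB ih =>
      intro h2
      rw [block_step r A B hr (by omega), ih (by omega), if_neg (by omega)]
      omega

lemma Fstep1 (A : ℕ) (hr : 0 < r) (hA : A < r) :
    cnt r ((A+1)*(2*r^2)) = cnt r (A*(2*r^2)) + (A+1)*(A+1) := by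
  have h1 : (A+1)*(2*r^2) = A*(2*r^2) + (2*r)*r := by ring
  rw [h1, reg1b r A hr hA (2*r) (by omega) le_rfl]
  have h2 : 2*A+1 = 2*A+1 := rfl
  rw [Snat_odd]

lemma reg2full (A : ℕ) (hr : 0 < r) (hA1 : r ≤ A) :
    ∀ B, B + 2*r + 1 ≤ 2*A → B ≤ 2*r → cnt r (A*(2*r^2) + B*r) = cnt r (A*(2*r^2)) + B*r := by
  intro B
  induction B with
  | zero => intro _ _; simp
  | succ B ih =>
      intro h1 h2
      rw [block_step r A B hr (by omega), ih (by omega) (by omega),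
        if_pos (by omega), if_pos (by omega)]
      ring

lemma reg2partial (A : ℕ) (hr : 0 < r) (hA1 : r ≤ A) (hA2 : A ≤ 2*r - 1) :
    ∀ B, 2*A - (2*r+1) ≤ B → B ≤ 2*r →
      cnt r (A*(2*r^2) + B*r) + Snat (2*A - (2*r+1)) =
      cnt r (A*(2*r^2)) + (2*A - (2*r+1))*r + Snat B := by
  intro B hBK
  induction B, hBK using Nat.le_induction with
  | base =>
      intro _
      rcases Nat.eq_zero_or_pos (2*A - (2*r+1)) with h0 | hpos
      · rw [h0]; simp
      · rw [reg2full r A hr hA1 (2*A - (2*r+1)) (by omega) (by omega)]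
  | succ B hB ih =>
      intro h2
      rw [block_step r A B hr (by omega), if_pos (by omega), if_neg (by omega), Snat_succ]
      have := ih (by omega)
      omega

end Blocks

section Ineq

variable (r : ℕ)

/-- 2·(count below A·q) − A·q -/
def Ez (A : ℕ) : ℤ := 2 * (cnt r (A*(2*r^2)) : ℤ) - (A : ℤ)*(2*(r:ℤ)^2)

def fz (B : ℕ) : ℤ := 2 * (Snat B : ℤ) - (B : ℤ)*(r : ℤ)

def Dz (t : ℕ) : ℤ := 2 * (cnt r (t+1) : ℤ) - (t : ℤ)

lemma Dz_run (x d : ℕ) (h : ∀ e, e ≤ d → Pd r (x + e)) : Dz r (x + d) = Dz r x + d := by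
  induction d with
  | zero => simp
  | succ d ih =>
      have hp : Pd r (x + d + 1) := by
        have := h (d+1) le_rfl
        rwa [show x + (d+1) = x + d + 1 from by ring] at this
      have h1 : x + (d+1) + 1 = (x + d + 1) + 1 := by ring
      unfold Dz
      rw [h1, cnt_succ, if_pos hp]
      have h2 := ih (fun e he => h e (by omega))
      unfold Dz at h2
      push_cast
      push_cast at h2
      linarith

lemma Emono1 (hr : 0 < r) : ∀ k A, A + k = r - 1 → Ez r (r-1) ≤ Ez r A := by
  intro k
  induction k with
  | zero => intro A hA; rw [show A = r - 1 by omega]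
  | succ k ih =>
      intro A hA
      have h1 : Ez r (r-1) ≤ Ez r (A+1) := ih (A+1) (by omega)
      refine le_trans h1 ?_
      unfold Ez
      rw [Fstep1 r A hr (by omega)]
      have h2 : ((A:ℤ)+1)*((A:ℤ)+1) ≤ (r:ℤ)^2 := by
        have : (A:ℤ) + 1 ≤ (r:ℤ) := by exact_mod_cast (by omega : A + 1 ≤ r)
        nlinarith [Int.ofNat_nonneg A]
      push_cast
      nlinarith

lemma Fstep2 (A : ℕ) (hr : 0 < r) (hA1 : r ≤ A) (hA2 : A ≤ 2*r - 1) :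
    cnt r ((A+1)*(2*r^2)) + Snat (2*A - (2*r+1)) =
      cnt r (A*(2*r^2)) + (2*A - (2*r+1))*r + (r*r + r) := by
  have h1 : (A+1)*(2*r^2) = A*(2*r^2) + (2*r)*r := by ring
  rw [h1, reg2partial r A hr hA1 hA2 (2*r) (by omega) le_rfl, Snat_even]

/-- E is ≥ E(r-1) on [r, 2r-1] -/
lemma Emono1b (hr : 0 < r) : ∀ A, r ≤ A → A ≤ 2*r - 1 → Ez r (r-1) ≤ Ez r A := by
  intro A hA1
  induction A, hA1 using Nat.le_induction with
  | base =>
      intro _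
      have hF := Fstep1 r (r-1) hr (by omega)
      rw [show r - 1 + 1 = r from by omega] at hF
      have h0 : Ez r r = Ez r (r-1) := by
        unfold Ez
        have hF' : (cnt r (r*(2*r^2)) : ℤ) = (cnt r ((r-1)*(2*r^2)) : ℤ) + (r:ℤ)*(r:ℤ) := by
          exact_mod_cast hF
        have hc : ((r - 1 : ℕ) : ℤ) = (r:ℤ) - 1 := by
          have : 1 ≤ r := hr
          push_cast [this]; ring
        rw [hF', hc]
        ring
      omega
  | succ A hA ih =>
      intro h2
      refine le_trans (ih (by omega)) ?_
      have hF := Fstep2 r A hr hA (by omega)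
      have hle := Snat_le r (2*A - (2*r+1)) (by omega)
      obtain ⟨K, hK⟩ : ∃ K, 2*A - (2*r+1) = K := ⟨_, rfl⟩
      rw [hK] at hF hle
      unfold Ez
      have hF' : (cnt r ((A+1)*(2*r^2)) : ℤ) + (Snat K : ℤ)
          = (cnt r (A*(2*r^2)) : ℤ) + (K:ℤ)*(r:ℤ) + ((r:ℤ)*(r:ℤ) + (r:ℤ)) := by
        exact_mod_cast hF
      have hle' : (Snat K : ℤ) ≤ (K:ℤ)*(r:ℤ) + (r:ℤ) := by exact_mod_cast hle
      push_cast
      nlinarith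

lemma Emono2 (hr : 0 < r) : ∀ A, r ≤ A → A ≤ 2*r - 1 →
    Ez r (r-1) ≤ Ez r A + 2*((2*A - (2*r+1) : ℕ) : ℤ)*(r:ℤ) - 2*(Snat (2*A - (2*r+1)) : ℤ) := by
  intro A hA1
  induction A, hA1 using Nat.le_induction with
  | base =>
      intro h2
      have h0 : 2*r - (2*r+1) = 0 := by omega
      rw [h0]
      simp [Snat]
      exact Emono1b r hr r le_rfl h2
  | succ A hA ih =>
      intro h2
      have hF := Fstep2 r A hr hA (by omega)
      have hle := Snat_le r (2*(A+1) - (2*r+1)) (by omega)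
      obtain ⟨K, hK⟩ : ∃ K, 2*A - (2*r+1) = K := ⟨_, rfl⟩
      obtain ⟨K', hK'⟩ : ∃ K', 2*(A+1) - (2*r+1) = K' := ⟨_, rfl⟩
      rw [hK] at hF
      rw [hK'] at hle
      rw [hK] at ih
      rw [hK']
      have hF' : (cnt r ((A+1)*(2*r^2)) : ℤ) + (Snat K : ℤ)
          = (cnt r (A*(2*r^2)) : ℤ) + (K:ℤ)*(r:ℤ) + ((r:ℤ)*(r:ℤ) + (r:ℤ)) := by
        exact_mod_cast hF
      have hle' : (Snat K' : ℤ) ≤ (K':ℤ)*(r:ℤ) + (r:ℤ) := by exact_mod_cast hle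
      have ih' := ih (by omega)
      unfold Ez at ih' ⊢
      push_cast at ih' ⊢
      nlinarith

lemma int_consec (c : ℤ) : 0 ≤ c*c + c := by
  rcases le_or_gt 0 c with h | h
  · nlinarith
  · have h1 : c + 1 ≤ 0 := by omega
    nlinarith

lemma fmin (m B : ℕ) (hm : 1 ≤ m) : fz (2*m) (2*m-1) ≤ fz (2*m) B := by
  have h1 : 2*m-1 = 2*(m-1)+1 := by omega
  have hSr : Snat (2*m-1) = m*m := by
    rw [h1, Snat_odd, show m-1+1 = m from by omega]
  have hc : ((2*m-1 : ℕ) : ℤ) = 2*(m:ℤ) - 1 := by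
    push_cast [show 1 ≤ 2*m from by omega]; ring
  unfold fz
  rw [hSr, hc]
  rcases Nat.even_or_odd B with ⟨u, hu⟩ | ⟨u, hu⟩
  · have hB : B = 2*u := by omega
    subst hB
    rw [Snat_even]
    push_cast
    nlinarith [int_consec ((u:ℤ) - (m:ℤ))]
  · subst hu
    rw [Snat_odd]
    push_cast
    nlinarith [sq_nonneg ((u:ℤ) + 1 - (m:ℤ))]

lemma fneg (m : ℕ) (hm : 1 ≤ m) : fz (2*m) (2*m-1) ≤ 0 := by
  have h1 : 2*m-1 = 2*(m-1)+1 := by omega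
  have hSr : Snat (2*m-1) = m*m := by
    rw [h1, Snat_odd, show m-1+1 = m from by omega]
  have hc : ((2*m-1 : ℕ) : ℤ) = 2*(m:ℤ) - 1 := by
    push_cast [show 1 ≤ 2*m from by omega]; ring
  unfold fz
  rw [hSr, hc]
  push_cast
  nlinarith [Int.ofNat_nonneg m, (by exact_mod_cast hm : (1:ℤ) ≤ (m:ℤ))]

/-- The main block bound: the value of Dz at the start of block (A,B) is at least Dz s. -/
lemma Dz_block (A B : ℕ) (hr2 : 2 ≤ r) (hrE : r % 2 = 0) (hB : B < 2*r)
    (hA2 : A ≤ 2*r-1) (hBA : B ≤ 2*A) :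
    Ez r (r-1) + fz r (r-1) + 2 ≤ Dz r (A*(2*r^2) + B*r) := by
  have hr : 0 < r := by omega
  obtain ⟨m, hm⟩ : ∃ m, r = 2*m := ⟨r/2, by omega⟩
  have hm1 : 1 ≤ m := by omega
  have hPx : Pd r (A*(2*r^2) + B*r) := by
    have := (Pd_iff r A B 0 hr hB hr).mpr ⟨hBA, Or.inl (by omega)⟩
    rwa [Nat.add_zero] at this
  have hDx : Dz r (A*(2*r^2) + B*r) = 2*(cnt r (A*(2*r^2) + B*r) : ℤ) + 2
      - (A:ℤ)*(2*(r:ℤ)^2) - (B:ℤ)*(r:ℤ) := by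
    unfold Dz
    rw [cnt_succ, if_pos hPx]
    push_cast
    ring
  rcases le_or_gt (A+1) r with hAr | hAr
  · -- A ≤ r-1
    have hreg := reg1 r A hr (by omega) B (by omega)
    have hfm : fz r (r-1) ≤ fz r B := by rw [hm]; exact fmin m B hm1
    have hE : Ez r (r-1) ≤ Ez r A := Emono1 r hr (r-1-A) A (by omega)
    have hreg' : (cnt r (A*(2*r^2) + B*r) : ℤ) = (cnt r (A*(2*r^2)) : ℤ) + (Snat B : ℤ) := by
      exact_mod_cast hreg
    unfold fz at hfm ⊢
    unfold Ez at hE ⊢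
    rw [hDx, hreg']
    push_cast at hE hfm ⊢
    linarith
  · -- r ≤ A
    have hAr' : r ≤ A := by omega
    have hfm : fz r (r-1) ≤ fz r B := by rw [hm]; exact fmin m B hm1
    have hfn : fz r (r-1) ≤ 0 := by rw [hm]; exact fneg m hm1
    rcases le_or_gt B (2*A - (2*r+1)) with hBK | hBK
    · -- full region
      have hreg : cnt r (A*(2*r^2) + B*r) = cnt r (A*(2*r^2)) + B*r := by
        rcases Nat.eq_zero_or_pos B with hB0 | hB0
        · subst hB0; simp
        · exact reg2full r A hr hAr' B (by omega) (by omega)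
      have hE : Ez r (r-1) ≤ Ez r A := Emono1b r hr A hAr' hA2
      have hreg' : (cnt r (A*(2*r^2) + B*r) : ℤ) = (cnt r (A*(2*r^2)) : ℤ) + (B:ℤ)*(r:ℤ) := by
        exact_mod_cast hreg
      unfold Ez at hE ⊢
      rw [hDx, hreg']
      push_cast at hE ⊢
      nlinarith [Int.ofNat_nonneg B, Int.ofNat_nonneg r, mul_nonneg (Int.ofNat_nonneg B) (Int.ofNat_nonneg r)]
    · -- partial region
      have hreg := reg2partial r A hr hAr' hA2 B (by omega) (by omega)
      have hE := Emono2 r hr A hAr' hA2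
      obtain ⟨K, hK⟩ : ∃ K, 2*A - (2*r+1) = K := ⟨_, rfl⟩
      rw [hK] at hreg hE
      have hreg' : (cnt r (A*(2*r^2) + B*r) : ℤ) + (Snat K : ℤ)
          = (cnt r (A*(2*r^2)) : ℤ) + (K:ℤ)*(r:ℤ) + (Snat B : ℤ) := by
        exact_mod_cast hreg
      unfold fz at hfm ⊢
      unfold Ez at hE ⊢
      rw [hDx]
      push_cast at hE hfm ⊢
      linarith

end Ineq

section Membership

variable (r : ℕ)

lemma normB (hr : 2 ≤ r) : ∀ B, ∀ A d, d < r → 2*d ≤ B → B ≤ 2*A →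
    Pd r (A*(2*r^2) + B*r + d) := by
  intro B
  induction B using Nat.strong_induction_on with
  | _ B ih =>
    intro A d hd hdB hBA
    rcases lt_or_ge B (2*r) with hB2r | hB2r
    · exact (Pd_iff r A B d (by omega) hB2r hd).mpr ⟨hBA, Or.inl hdB⟩
    · obtain ⟨B', rfl⟩ : ∃ B', B = B' + 2*r := ⟨B - 2*r, by omega⟩
      have heq : A*(2*r^2) + (B' + 2*r)*r + d = (A+1)*(2*r^2) + B'*r + d := by ring
      rw [heq]
      rcases le_or_gt (2*d) B' with hd' | hd'
      · exact ih B' (by omega) (A+1) d hd hd' (by omega)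
      · have hB'2r : B' < 2*r := by omega
        exact (Pd_iff r (A+1) B' d (by omega) hB'2r hd).mpr
          ⟨by omega, Or.inr (by omega)⟩

lemma normD (hr : 2 ≤ r) : ∀ d A B, 2*d ≤ B → B ≤ 2*A → Pd r (A*(2*r^2) + B*r + d) := by
  intro d
  induction d using Nat.strong_induction_on with
  | _ d ih =>
    intro A B hdB hBA
    rcases lt_or_ge d r with hd | hd
    · exact normB r hr B A d hd hdB hBA
    · obtain ⟨d', rfl⟩ : ∃ d', d = d' + r := ⟨d - r, by omega⟩
      obtain ⟨B', rfl⟩ : ∃ B', B = B' + 2*r := ⟨B - 2*r, by omega⟩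
      have heq : A*(2*r^2) + (B' + 2*r)*r + (d' + r) = (A+1)*(2*r^2) + (B'+1)*r + d' := by
        ring
      rw [heq]
      exact ih d' (by omega) (A+1) (B'+1) (by omega) (by omega)

lemma mem_closure_iff_Pd (hr : 2 ≤ r) (n : ℕ) :
    n ∈ AddSubmonoid.closure ({2*r^2, 2*r^2 + r, 2*r^2 + 2*r, 2*r^2 + 2*r + 1} : Set ℕ)
      ↔ Pd r n := by
  set X : Set ℕ := {2*r^2, 2*r^2 + r, 2*r^2 + 2*r, 2*r^2 + 2*r + 1} with hX
  constructor
  · intro hn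
    have key : ∀ k ∈ AddSubmonoid.closure X, ∃ A B d, k = A*(2*r^2) + B*r + d
        ∧ 2*d ≤ B ∧ B ≤ 2*A := by
      intro k hk
      induction hk using AddSubmonoid.closure_induction with
      | mem x hx =>
          simp only [hX, Set.mem_insert_iff, Set.mem_singleton_iff] at hx
          rcases hx with rfl | rfl | rfl | rfl
          · exact ⟨1, 0, 0, by ring, by omega, by omega⟩
          · exact ⟨1, 1, 0, by ring, by omega, by omega⟩
          · exact ⟨1, 2, 0, by ring, by omega, by omega⟩
          · exact ⟨1, 2, 1, by ring, by omega, by omega⟩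
      | zero => exact ⟨0, 0, 0, by omega, by omega, by omega⟩
      | add x y _ _ hx hy =>
          obtain ⟨A1, B1, d1, h1, h2, h3⟩ := hx
          obtain ⟨A2, B2, d2, h4, h5, h6⟩ := hy
          exact ⟨A1+A2, B1+B2, d1+d2, by subst h1 h4; ring, by omega, by omega⟩
    obtain ⟨A, B, d, h1, h2, h3⟩ := key n hn
    rw [h1]
    exact normD r hr d A B h2 h3
  · intro hn
    -- extract canonical digits
    have hr0 : 0 < r := by omega
    have hq0 : 0 < 2*r^2 := by positivity
    have hPn := hn
    unfold Pd at hPn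
    obtain ⟨A, hA⟩ : ∃ A, n / (2*r^2) = A := ⟨_, rfl⟩
    obtain ⟨B, hB⟩ : ∃ B, n % (2*r^2) / r = B := ⟨_, rfl⟩
    obtain ⟨d, hd⟩ : ∃ d, n % r = d := ⟨_, rfl⟩
    rw [hA, hB, hd] at hPn
    have hmod : n % (2*r^2) % r = n % r := Nat.mod_mod_of_dvd n ⟨2*r, by ring⟩
    have e2' : r * B + d = n % (2*r^2) := by
      have e2 := Nat.div_add_mod (n % (2*r^2)) r
      rw [hmod, hB, hd] at e2
      exact e2
    have hn1 : n = A*(2*r^2) + B*r + d := by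
      calc n = 2*r^2 * (n / (2*r^2)) + n % (2*r^2) := (Nat.div_add_mod n (2*r^2)).symm
        _ = 2*r^2 * A + (r*B + d) := by rw [hA, e2']
        _ = A*(2*r^2) + B*r + d := by ring
    have hdlt : d < r := by rw [← hd]; exact Nat.mod_lt n hr0
    obtain ⟨hc1, hc2⟩ := hPn
    -- build an additive representation A' B' d with 2*d ≤ B' ≤ 2*A'
    have hrep : ∃ A' B', n = A'*(2*r^2) + B'*r + d ∧ 2*d ≤ B' ∧ B' ≤ 2*A' := by
      rcases hc2 with h | h
      · exact ⟨A, B, hn1, h, hc1⟩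
      · refine ⟨A - 1, B + 2*r, ?_, by omega, by omega⟩
        have hA1 : 1 ≤ A := by omega
        have key : (A-1)*(2*r^2) + (B + 2*r)*r + d + (2*r^2) = n + 2*r^2 := by
          rw [hn1]
          have h2 : (A-1) + 1 = A := by omega
          calc (A-1)*(2*r^2) + (B + 2*r)*r + d + (2*r^2)
              = ((A-1)+1)*(2*r^2) + B*r + 2*r*r + d := by ring
            _ = A*(2*r^2) + B*r + 2*r*r + d := by rw [h2]
            _ = A*(2*r^2) + B*r + d + 2*r^2 := by ring
        exact (Nat.add_right_cancel key).symm
    obtain ⟨A', B', hn2, h2d, h2A⟩ := hrep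
    -- now write n as a combination of the four generators
    set c := (B' - 2*d)/2 with hcdef
    set b := (B' - 2*d) % 2 with hbdef
    set a := A' - (b + c + d) with hadef
    have hb2c : b + 2*c + 2*d = B' := by omega
    have habcd : a + (b + c + d) = A' := by omega
    have hcomb : n = a*(2*r^2) + b*(2*r^2 + r) + c*(2*r^2 + 2*r) + d*(2*r^2 + 2*r + 1) := by
      rw [hn2]
      calc A'*(2*r^2) + B'*r + d
          = (a + (b + c + d))*(2*r^2) + (b + 2*c + 2*d)*r + d := by rw [habcd, hb2c]
        _ = a*(2*r^2) + b*(2*r^2 + r) + c*(2*r^2 + 2*r) + d*(2*r^2 + 2*r + 1) := by ring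
    rw [hcomb]
    have hmul : ∀ g k : ℕ, g ∈ X → k * g ∈ AddSubmonoid.closure X := by
      intro g k hg
      simpa [smul_eq_mul] using
        AddSubmonoid.nsmul_mem _ (AddSubmonoid.subset_closure hg) k
    have g1 : (2*r^2 : ℕ) ∈ X := by simp [hX]
    have g2 : (2*r^2 + r : ℕ) ∈ X := by simp [hX]
    have g3 : (2*r^2 + 2*r : ℕ) ∈ X := by simp [hX]
    have g4 : (2*r^2 + 2*r + 1 : ℕ) ∈ X := by simp [hX]
    exact AddSubmonoid.add_mem _ (AddSubmonoid.add_mem _ (AddSubmonoid.add_mem _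
      (hmul _ a g1) (hmul _ b g2)) (hmul _ c g3)) (hmul _ d g4)

lemma digit_decomp (hr0 : 0 < r) (n : ℕ) :
    ∃ A B d, n = A*(2*r^2) + B*r + d ∧ B < 2*r ∧ d < r ∧
      (Pd r n ↔ (B ≤ 2*A ∧ (2*d ≤ B ∨ B + 2*r + 2 ≤ 2*A))) := by
  have hq0 : 0 < 2*r^2 := by positivity
  refine ⟨n / (2*r^2), n % (2*r^2) / r, n % r, ?_, ?_, Nat.mod_lt n hr0, ?_⟩
  · have hmod : n % (2*r^2) % r = n % r := Nat.mod_mod_of_dvd n ⟨2*r, by ring⟩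
    have e2 := Nat.div_add_mod (n % (2*r^2)) r
    rw [hmod] at e2
    calc n = 2*r^2 * (n / (2*r^2)) + n % (2*r^2) := (Nat.div_add_mod n (2*r^2)).symm
      _ = 2*r^2 * (n / (2*r^2)) + (r * (n % (2*r^2) / r) + n % r) := by rw [e2]
      _ = n / (2*r^2) *(2*r^2) + (n % (2*r^2) / r)*r + n % r := by ring
  · have h1 : n % (2*r^2) < r*(2*r) := by
      have := Nat.mod_lt n hq0
      nlinarith
    exact Nat.div_lt_of_lt_mul h1
  · constructor
    · intro hp
      exact hp
    · intro hp
      exact hp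

lemma conductor_mem (hr : 2 ≤ r) (n : ℕ) (hn : 4*r^3 - 2*r ≤ n) : Pd r n := by
  have hr0 : 0 < r := by omega
  obtain ⟨A, B, d, hrep, hB, hd, hiff⟩ := digit_decomp r hr0 n
  have hn' : 4*r^3 - 2*r ≤ A*(2*r^2) + B*r + d := hrep ▸ hn
  have hr3 : r ≤ r^3 := Nat.le_self_pow (by norm_num) r
  have hsub : 2*r ≤ 4*r^3 := by omega
  have hzn : (4:ℤ)*r^3 - 2*r ≤ (A:ℤ)*(2*(r:ℤ)^2) + (B:ℤ)*r + (d:ℤ) := by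
    zify [hsub] at hn'
    convert hn' using 2 <;> push_cast <;> ring
  have hA1 : 2*r - 1 ≤ A := by
    by_contra hcon
    push_neg at hcon
    have hA2 : (A:ℤ) ≤ 2*(r:ℤ) - 2 := by omega
    have hBz : (B:ℤ) ≤ 2*(r:ℤ) - 1 := by omega
    have hdz : (d:ℤ) ≤ (r:ℤ) - 1 := by omega
    have hrz : (2:ℤ) ≤ (r:ℤ) := by exact_mod_cast hr
    nlinarith [mul_le_mul_of_nonneg_right hA2 (by positivity : (0:ℤ) ≤ 2*(r:ℤ)^2)]
  apply hiff.mpr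
  rcases eq_or_lt_of_le hA1 with hAeq | hAgt
  · -- A = 2r-1 : show B ≥ 2r-2
    have hB1 : 2*r - 2 ≤ B := by
      by_contra hcon
      push_neg at hcon
      have hA2 : (A:ℤ) = 2*(r:ℤ) - 1 := by omega
      have hBz : (B:ℤ) ≤ 2*(r:ℤ) - 3 := by omega
      have hdz : (d:ℤ) ≤ (r:ℤ) - 1 := by omega
      have hrz : (2:ℤ) ≤ (r:ℤ) := by exact_mod_cast hr
      nlinarith
    constructor
    · omega
    · left; omega
  · -- A ≥ 2r
    have hA2 : 2*r ≤ A := by omega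
    constructor
    · omega
    · rcases le_or_gt (2*d) B with h | h
      · left; exact h
      · right; omega

lemma conductor_gap (hr : 2 ≤ r) : ¬ Pd r (4*r^3 - 2*r - 1) := by
  have hr0 : 0 < r := by omega
  have heq : 4*r^3 - 2*r - 1 = (2*r-1)*(2*r^2) + (2*r-3)*r + (r-1) := by
    have h1 : 1 ≤ 2*r := by omega
    have h2 : 3 ≤ 2*r := by omega
    have h3 : 1 ≤ r := by omega
    have hr3 : r ≤ r^3 := Nat.le_self_pow (by norm_num) r
    have hc2 : 2*r ≤ 4*r^3 := by omega
    have hc1 : 1 ≤ 4*r^3 - 2*r := by omega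
    zify [h1, h2, h3, hc1, hc2]
    ring
  rw [heq]
  rw [Pd_iff r (2*r-1) (2*r-3) (r-1) hr0 (by omega) (by omega)]
  rintro ⟨h1, h2 | h2⟩ <;> omega

lemma closure_eq (hr : 2 ≤ r) :
    (AddSubmonoid.closure ({2*r^2, 2*r^2 + r, 2*r^2 + 2*r, 2*r^2 + 2*r + 1} : Set ℕ) : Set ℕ)
      = {n | Pd r n} := Set.ext fun n => mem_closure_iff_Pd r hr n

lemma ngCond_eq (hr : 2 ≤ r) : ngCond {n | Pd r n} = 4*r^3 - 2*r := by
  unfold ngCond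
  apply le_antisymm
  · exact Nat.sInf_le (by intro n hn; exact conductor_mem r hr n hn)
  · apply le_csInf ⟨4*r^3 - 2*r, by intro n hn; exact conductor_mem r hr n hn⟩
    intro k hk
    by_contra hcon
    push_neg at hcon
    have hgap := hk (4*r^3 - 2*r - 1) (by omega)
    exact conductor_gap r hr hgap

lemma sig_eq (t : ℕ) : sig {n | Pd r n} t = (t:ℚ)/2 - (cnt r (t+1) : ℚ) + 1 := by
  unfold sig
  have hset : {n | Pd r n} ∩ Set.Icc 0 t = ↑((Finset.range (t+1)).filter (Pd r)) := by
    ext n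
    simp only [Set.mem_inter_iff, Set.mem_setOf_eq, Set.mem_Icc, Finset.coe_filter,
      Finset.mem_range, Nat.lt_succ_iff]
    constructor
    · rintro ⟨hp, _, hle⟩; exact ⟨hle, hp⟩
    · rintro ⟨hle, hp⟩; exact ⟨hp, Nat.zero_le n, hle⟩
  rw [hset, Set.ncard_coe_finset]
  rfl

lemma cnt_closed (hr0 : 0 < r) : ∀ A, A ≤ r → 6 * cnt r (A*(2*r^2)) = A*(A+1)*(2*A+1) := by
  intro A
  induction A with
  | zero => intro _; simp [cnt]
  | succ A ih =>
      intro hA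
      rw [Fstep1 r A hr0 (by omega), Nat.mul_add, ih (by omega)]
      ring

lemma Dz_s_eq (hr : 2 ≤ r) :
    Dz r ((r-1)*(2*r^2) + (r-1)*r) = Ez r (r-1) + fz r (r-1) + 2 := by
  have hr0 : 0 < r := by omega
  have hPs : Pd r ((r-1)*(2*r^2) + (r-1)*r) := by
    have := (Pd_iff r (r-1) (r-1) 0 hr0 (by omega) hr0).mpr ⟨by omega, Or.inl (by omega)⟩
    rwa [Nat.add_zero] at this
  have hreg := reg1 r (r-1) hr0 (by omega) (r-1) (by omega)
  unfold Dz Ez fz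
  rw [cnt_succ, if_pos hPs, hreg]
  push_cast
  ring

lemma Dz_ge (hr : 2 ≤ r) (hrE : r % 2 = 0) (t : ℕ) (ht : Pd r t) (htle : t ≤ 4*r^3 - 2*r) :
    Dz r ((r-1)*(2*r^2) + (r-1)*r) ≤ Dz r t := by
  have hr0 : 0 < r := by omega
  obtain ⟨A, B, d, hrep, hB, hd, hiff⟩ := digit_decomp r hr0 t
  obtain ⟨hc1, hc2⟩ := hiff.mp ht
  have hA2 : A ≤ 2*r - 1 := by
    by_contra hcon
    push_neg at hcon
    have hA3 : 2*r ≤ A := by omega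
    have : 2*r*(2*r^2) ≤ A*(2*r^2) := Nat.mul_le_mul_right _ hA3
    have h4 : 4*r^3 ≤ t := by
      rw [hrep]
      nlinarith
    have hr3 : r ≤ r^3 := Nat.le_self_pow (by norm_num) r
    omega
  have hdc : ∀ e, e ≤ d → Pd r (A*(2*r^2) + B*r + e) := by
    intro e he
    exact (Pd_iff r A B e hr0 hB (by omega)).mpr ⟨hc1, by omega⟩
  have hrun : Dz r (A*(2*r^2) + B*r + d) = Dz r (A*(2*r^2) + B*r) + d :=
    Dz_run r _ d hdc
  have hblock := Dz_block r A B hr hrE hB hA2 hc1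
  rw [Dz_s_eq r hr, hrep, hrun]
  have : (0:ℤ) ≤ (d:ℤ) := Int.ofNat_nonneg d
  linarith

end Membership

end Suz

theorem stmt17 (h q0 q : ℕ) (hh : 1 ≤ h) (hq0 : q0 = 2 ^ h) (hq : q = 2 * q0 ^ 2)
    (S : Set ℕ)
    (hS : S = (AddSubmonoid.closure
      ({q, q + q0, q + 2 * q0, q + 2 * q0 + 1} : Set ℕ) : Set ℕ))
    (s : ℕ) (hs : s = (q0 - 1) * (q + q0)) :
    s = q0 * (q - 1) - q / 2 ∧ s ∈ S ∧ s ≤ ngCond S ∧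
    (∀ t ∈ S, t ≤ ngCond S → sig S t ≤ sig S s) ∧
    sig S s = (q0 : ℚ) / 12 * (4 * (q : ℚ) - 3 * (q0 : ℚ) - 8) := by
  subst hq
  have hr2 : 2 ≤ q0 := by
    rw [hq0]
    calc 2 = 2^1 := by norm_num
      _ ≤ 2^h := Nat.pow_le_pow_right (by norm_num) hh
  have hrE : q0 % 2 = 0 := by
    obtain ⟨h', rfl⟩ : ∃ h', h = h'+1 := ⟨h-1, by omega⟩
    rw [hq0, pow_succ]
    omega
  have hr0 : 0 < q0 := by omega
  have h1 : (1:ℕ) ≤ q0 := by omega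
  have hr3 : q0 ≤ q0^3 := Nat.le_self_pow (by norm_num) q0
  have hSP : S = {n | Suz.Pd q0 n} := by rw [hS]; exact Suz.closure_eq q0 hr2
  have hseq : s = (q0-1)*(2*q0^2) + (q0-1)*q0 := by rw [hs]; ring
  have hPs : Suz.Pd q0 ((q0-1)*(2*q0^2) + (q0-1)*q0) := by
    have := (Suz.Pd_iff q0 (q0-1) (q0-1) 0 hr0 (by omega) hr0).mpr
      ⟨by omega, Or.inl (by omega)⟩
    rwa [Nat.add_zero] at this
  obtain ⟨m, hm⟩ : ∃ m, q0 = 2*m := ⟨q0/2, by omega⟩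
  have hm1 : 1 ≤ m := by omega
  refine ⟨?_, ?_, ?_, ?_, ?_⟩
  · -- s = q0*(q-1) - q/2
    have hdiv : (2*q0^2)/2 = q0^2 := by omega
    rw [hdiv, hs]
    have h2 : 1 ≤ 2*q0^2 := by have := pow_pos hr0 2; omega
    have h3 : q0^2 ≤ q0*(2*q0^2-1) := by
      zify [h2]
      nlinarith [(by exact_mod_cast hr2 : (2:ℤ) ≤ (q0:ℤ))]
    zify [h1, h2, h3]
    ring
  · -- s ∈ S
    rw [hSP, hseq]
    exact hPs
  · -- s ≤ ngCond S
    rw [hSP, Suz.ngCond_eq q0 hr2, hs]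
    have h2 : 2*q0 ≤ 4*q0^3 := by omega
    zify [h1, h2]
    nlinarith [(by exact_mod_cast hr2 : (2:ℤ) ≤ (q0:ℤ))]
  · -- maximality
    intro t ht htle
    rw [hSP] at ht htle ⊢
    rw [Suz.ngCond_eq q0 hr2] at htle
    have ht' : Suz.Pd q0 t := ht
    have hD := Suz.Dz_ge q0 hr2 hrE t ht' htle
    rw [← hseq] at hD
    unfold Suz.Dz at hD
    have hDq : 2*((Suz.cnt q0 (s+1) : ℚ)) - (s:ℚ) ≤ 2*((Suz.cnt q0 (t+1) : ℚ)) - (t:ℚ) := by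
      exact_mod_cast hD
    rw [Suz.sig_eq q0 t, Suz.sig_eq q0 s]
    linarith
  · -- the value of sig at s
    rw [hSP]
    have hc := Suz.cnt_closed q0 hr0 (q0-1) (by omega)
    rw [show q0-1+1 = q0 from by omega, show 2*(q0-1)+1 = 2*q0-1 from by omega] at hc
    have hS1 : Suz.Snat (q0-1) = m*m := by
      rw [show q0-1 = 2*(m-1)+1 from by omega, Suz.Snat_odd, show m-1+1 = m from by omega]
    have hreg := Suz.reg1 q0 (q0-1) hr0 (by omega) (q0-1) (by omega)
    have hcnt : Suz.cnt q0 (s+1) = Suz.cnt q0 ((q0-1)*(2*q0^2)) + m*m + 1 := by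
      rw [hseq, Suz.cnt_succ, if_pos hPs, hreg, hS1]
    have hcq : (6:ℚ) * (Suz.cnt q0 ((q0-1)*(2*q0^2)) : ℚ) = ((q0:ℚ)-1)*(q0:ℚ)*(2*(q0:ℚ)-1) := by
      have hcc : ((6 * Suz.cnt q0 ((q0-1)*(2*q0^2)) : ℕ) : ℚ)
          = (((q0-1)*q0*(2*q0-1) : ℕ) : ℚ) := by exact_mod_cast hc
      push_cast [Nat.cast_sub h1, Nat.cast_sub (show 1 ≤ 2*q0 from by omega)] at hcc
      linarith
    have hsq : (s:ℚ) = ((q0:ℚ)-1)*(2*(q0:ℚ)^2 + (q0:ℚ)) := by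
      rw [hs]
      push_cast [Nat.cast_sub h1]
      ring
    rw [Suz.sig_eq q0 s, hcnt]
    push_cast
    rw [hsq]
    have hmq : (q0:ℚ) = 2*(m:ℚ) := by exact_mod_cast hm
    rw [hmq] at hcq ⊢
    linear_combination (-1/6 : ℚ) * hcq
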